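/- arXiv:2605.04421 — 2 statements merged into one kernel-verified Lean document; each statement's English description precedes it below -/
import Mathlib

section
/- Let $f_\tau, f_\phi : [0,\infty) \to \mathbb{R}$ be continuous functions with $0 < \tau_{\min} \le f_\tau(t)$ for all $t$, and suppose $A_{\min} \le f_\phi(t)/f_\tau(t) \le A_{\max}$ for all $t \ge 0$. If $a : [0,\infty) \to \mathbb{R}$ is differentiable, satisfies $a'(t) = -f_\tau(t) a(t) + f_\phi(t)$ for all $t \ge 0$, and $A_{\min} \le a(0) \le A_{\max}$, then $A_{\min} \le a(t) \le A_{\max}$ for all $t \ge 0$. -/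
open Set

theorem lan_forward_invariance
    (fτ fφ a : ℝ → ℝ) (τmin Amin Amax : ℝ)
    (hfτc : ContinuousOn fτ (Set.Ici 0))
    (hfφc : ContinuousOn fφ (Set.Ici 0))
    (hτmin : 0 < τmin)
    (hτ : ∀ t ≥ (0:ℝ), τmin ≤ fτ t)
    (hratio : ∀ t ≥ (0:ℝ), Amin ≤ fφ t / fτ t ∧ fφ t / fτ t ≤ Amax)
    (hderiv : ∀ t ≥ (0:ℝ), HasDerivAt a (-(fτ t) * a t + fφ t) t)
    (h0 : Amin ≤ a 0 ∧ a 0 ≤ Amax) :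
    ∀ t ≥ (0:ℝ), Amin ≤ a t ∧ a t ≤ Amax := by
  -- extend fτ continuously to all of ℝ
  set g : ℝ → ℝ := fun s => fτ (max s 0) with hg
  have hgc : Continuous g :=
    hfτc.comp_continuous (continuous_id.max continuous_const) (fun x => le_max_right x 0)
  have hg_eq : ∀ s : ℝ, 0 ≤ s → g s = fτ s := by
    intro s hs; simp [hg, max_eq_left hs]
  -- integrating factor
  set F : ℝ → ℝ := fun s => ∫ u in (0:ℝ)..s, g u with hF
  have hFd : ∀ s : ℝ, HasDerivAt F (g s) s := by
    intro s
    exact intervalIntegral.integral_hasDerivAt_right (hgc.intervalIntegrable 0 s)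
      (hgc.stronglyMeasurableAtFilter _ _) hgc.continuousAt
  have hF0 : F 0 = 0 := by simp [hF]
  have hτpos : ∀ s : ℝ, 0 ≤ s → 0 < fτ s := fun s hs => hτmin.trans_le (hτ s hs)
  -- derivative of (a - C) * exp F at points of Ici 0
  have key : ∀ C : ℝ, ∀ s : ℝ, 0 ≤ s →
      HasDerivAt (fun x => (a x - C) * Real.exp (F x))
        (Real.exp (F s) * (fφ s - C * fτ s)) s := by
    intro C s hs
    have h1 := ((hderiv s hs).sub_const C).mul ((hFd s).exp)
    rw [hg_eq s hs] at h1
    exact h1.congr_deriv (by ring)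
  have hcont : ∀ C : ℝ, ContinuousOn (fun x => (a x - C) * Real.exp (F x)) (Ici 0) :=
    fun C x hx => ((key C x hx).continuousAt).continuousWithinAt
  have hdiff : ∀ C : ℝ, DifferentiableOn ℝ (fun x => (a x - C) * Real.exp (F x))
      (interior (Ici (0:ℝ))) := by
    intro C x hx
    rw [interior_Ici] at hx
    exact ((key C x (le_of_lt hx)).differentiableAt).differentiableWithinAt
  intro t ht
  constructor
  · -- lower bound: (a - Amin) * exp F is monotone
    have hmono : MonotoneOn (fun x => (a x - Amin) * Real.exp (F x)) (Ici 0) := by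
      apply monotoneOn_of_deriv_nonneg (convex_Ici 0) (hcont Amin) (hdiff Amin)
      intro x hx
      rw [interior_Ici] at hx
      rw [(key Amin x (le_of_lt hx)).deriv]
      have hfp := hτpos x (le_of_lt hx)
      have h1 := (hratio x (le_of_lt hx)).1
      have h2 : Amin * fτ x ≤ fφ x := by
        rw [le_div_iff₀ hfp] at h1; linarith
      have he := (Real.exp_pos (F x)).le
      nlinarith
    have := hmono (self_mem_Ici) ht ht
    have he := Real.exp_pos (F t)
    simp only [hF0, Real.exp_zero, mul_one] at this
    nlinarith [h0.1]
  · -- upper bound: (a - Amax) * exp F is antitone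
    have hanti : AntitoneOn (fun x => (a x - Amax) * Real.exp (F x)) (Ici 0) := by
      apply antitoneOn_of_deriv_nonpos (convex_Ici 0) (hcont Amax) (hdiff Amax)
      intro x hx
      rw [interior_Ici] at hx
      rw [(key Amax x (le_of_lt hx)).deriv]
      have hfp := hτpos x (le_of_lt hx)
      have h1 := (hratio x (le_of_lt hx)).2
      have h2 : fφ x ≤ Amax * fτ x := by
        rw [div_le_iff₀ hfp] at h1; linarith
      have he := (Real.exp_pos (F x)).le
      nlinarith
    have := hanti (self_mem_Ici) ht ht
    have he := Real.exp_pos (F t)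
    simp only [hF0, Real.exp_zero, mul_one] at this
    nlinarith [h0.2]
end

section
/- Let $f_\tau, f_\phi : [0,\infty) \to \mathbb{R}$ be continuous, with $f_\tau(t) \ge \tau_{\min} > 0$, and suppose $f_\phi(t)/f_\tau(t) \to A^*$ as $t \to \infty$ for some $A^* \in \mathbb{R}$, and that $f_\phi/f_\tau$ is bounded. If $a$ solves $a'(t) = -f_\tau(t) a(t) + f_\phi(t)$, then $a(t) \to A^*$ as $t \to \infty$. -/
theorem lan_asymptotic_tracking
    (fτ fφ a : ℝ → ℝ) (τmin A' : ℝ)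
    (hfτc : ContinuousOn fτ (Set.Ici 0))
    (hfφc : ContinuousOn fφ (Set.Ici 0))
    (hτmin : 0 < τmin)
    (hτ : ∀ t ≥ (0:ℝ), τmin ≤ fτ t)
    (hbdd : ∃ C, ∀ t ≥ (0:ℝ), |fφ t / fτ t| ≤ C)
    (hlim : Filter.Tendsto (fun t => fφ t / fτ t) Filter.atTop (nhds A'))
    (hderiv : ∀ t ≥ (0:ℝ), HasDerivAt a (-(fτ t) * a t + fφ t) t) :
    Filter.Tendsto a Filter.atTop (nhds A') := by
  rw [Metric.tendsto_nhds]
  intro ε hε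
  have hε2 : 0 < ε / 2 := by positivity
  obtain ⟨t₁, ht₁⟩ := Filter.eventually_atTop.mp
    (Metric.tendsto_nhds.mp hlim (ε / 2) hε2)
  set t₀ : ℝ := max t₁ 1 with ht₀def
  have ht₀1 : (1:ℝ) ≤ t₀ := le_max_right _ _
  have ht₀0 : (0:ℝ) ≤ t₀ := le_trans zero_le_one ht₀1
  have ht₀t₁ : t₁ ≤ t₀ := le_max_left _ _
  -- continuous extension of fτ
  set g : ℝ → ℝ := fun t => fτ (max t 1) with hgdef
  have hgc : Continuous g := hfτc.comp_continuous (continuous_id.max continuous_const)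
      (fun x => le_trans zero_le_one (le_max_right x 1))
  have hgτ : ∀ t, τmin ≤ g t := fun t => hτ _ (le_trans zero_le_one (le_max_right t 1))
  have hgeq : ∀ t, 1 ≤ t → g t = fτ t := by
    intro t ht
    simp only [hgdef, max_eq_left ht]
  set F : ℝ → ℝ := fun t => ∫ s in t₀..t, g s with hFdef
  have hF : ∀ t, HasDerivAt F (g t) t := fun t =>
    intervalIntegral.integral_hasDerivAt_right (hgc.intervalIntegrable _ _)
      hgc.stronglyMeasurable.stronglyMeasurableAtFilter hgc.continuousAt
  have hF0 : F t₀ = 0 := intervalIntegral.integral_same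
  have hFlb : ∀ t ≥ t₀, τmin * (t - t₀) ≤ F t := by
    intro t ht
    have h1 : (∫ _ in t₀..t, τmin) ≤ ∫ s in t₀..t, g s :=
      intervalIntegral.integral_mono_on ht intervalIntegrable_const
        (hgc.intervalIntegrable _ _) (fun x _ => hgτ x)
    simpa [intervalIntegral.integral_const, smul_eq_mul, mul_comm] using h1
  -- key derivative computation
  have key : ∀ c : ℝ, ∀ t ≥ t₀, HasDerivAt (fun s => (a s - A' - c) * Real.exp (F s))
      ((fτ t * (fφ t / fτ t - A' - c)) * Real.exp (F t)) t := by
    intro c t ht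
    have ht0 : (0:ℝ) ≤ t := le_trans ht₀0 ht
    have ht1 : (1:ℝ) ≤ t := le_trans ht₀1 ht
    have hτpos : 0 < fτ t := lt_of_lt_of_le hτmin (hτ t ht0)
    have hτne : fτ t ≠ 0 := ne_of_gt hτpos
    have h1 : HasDerivAt (fun s => a s - A' - c) (-(fτ t) * a t + fφ t) t :=
      ((hderiv t ht0).sub_const A').sub_const c
    have h2 : HasDerivAt (fun s => Real.exp (F s)) (Real.exp (F t) * g t) t := (hF t).exp
    have h3 := h1.mul h2
    refine h3.congr_deriv ?_
    rw [hgeq t ht1]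
    field_simp
    ring
  -- deriv bounds on the interior
  have hderivval : ∀ c : ℝ, ∀ x ∈ interior (Set.Ici t₀),
      deriv (fun s => (a s - A' - c) * Real.exp (F s)) x
        = (fτ x * (fφ x / fτ x - A' - c)) * Real.exp (F x) := by
    intro c x hx
    rw [interior_Ici] at hx
    exact (key c x (le_of_lt hx)).deriv
  have hnear : ∀ x ≥ t₀, |fφ x / fτ x - A'| < ε / 2 := by
    intro x hx
    have := ht₁ x (le_trans ht₀t₁ hx)
    rwa [Real.dist_eq] at this
  have hτpos' : ∀ x ≥ t₀, 0 < fτ x := fun x hx =>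
    lt_of_lt_of_le hτmin (hτ x (le_trans ht₀0 hx))
  -- upper bound: u is antitone
  have hup : AntitoneOn (fun s => (a s - A' - ε / 2) * Real.exp (F s)) (Set.Ici t₀) := by
    apply antitoneOn_of_deriv_nonpos (convex_Ici t₀)
    · exact fun x hx => ((key _ x hx).continuousAt).continuousWithinAt
    · intro x hx
      rw [interior_Ici] at hx
      exact ((key _ x (le_of_lt hx)).differentiableAt).differentiableWithinAt
    · intro x hx
      rw [hderivval _ x hx]
      rw [interior_Ici] at hx
      have h1 := (abs_lt.mp (hnear x (le_of_lt hx))).2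
      have h2 := hτpos' x (le_of_lt hx)
      exact mul_nonpos_of_nonpos_of_nonneg
        (mul_nonpos_of_nonneg_of_nonpos h2.le (by linarith)) (Real.exp_pos _).le
  -- lower bound: v is monotone
  have hdown : MonotoneOn (fun s => (a s - A' - (-(ε / 2))) * Real.exp (F s)) (Set.Ici t₀) := by
    apply monotoneOn_of_deriv_nonneg (convex_Ici t₀)
    · exact fun x hx => ((key _ x hx).continuousAt).continuousWithinAt
    · intro x hx
      rw [interior_Ici] at hx
      exact ((key _ x (le_of_lt hx)).differentiableAt).differentiableWithinAt
    · intro x hx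
      rw [hderivval _ x hx]
      rw [interior_Ici] at hx
      have h1 := (abs_lt.mp (hnear x (le_of_lt hx))).1
      have h2 := hτpos' x (le_of_lt hx)
      exact mul_nonneg (mul_nonneg h2.le (by linarith)) (Real.exp_pos _).le
  set K : ℝ := |a t₀ - A' - ε / 2| + |a t₀ - A' + ε / 2| with hKdef
  have hK0 : 0 ≤ K := by positivity
  clear_value K
  have hbound : ∀ t ≥ t₀, |a t - A'| ≤ ε / 2 + K * Real.exp (-(τmin * (t - t₀))) := by
    intro t ht
    have hexpF : (0:ℝ) < Real.exp (F t) := Real.exp_pos _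
    have hU := hup (Set.self_mem_Ici) (Set.mem_Ici.mpr ht) ht
    have hL := hdown (Set.self_mem_Ici) (Set.mem_Ici.mpr ht) ht
    simp only [hF0, Real.exp_zero, mul_one] at hU hL
    -- exp(-F t) ≤ exp(-(τmin (t - t₀)))
    have hexple : Real.exp (-(F t)) ≤ Real.exp (-(τmin * (t - t₀))) :=
      Real.exp_le_exp.mpr (neg_le_neg (hFlb t ht))
    have hexp1 : Real.exp (F t) * Real.exp (-(F t)) = 1 := by
      rw [← Real.exp_add]; simp
    have hC' : a t₀ - A' - ε / 2 ≤ K := by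
      rw [hKdef]
      have := le_abs_self (a t₀ - A' - ε / 2)
      have := abs_nonneg (a t₀ - A' + ε / 2)
      linarith
    have hC : -K ≤ a t₀ - A' + ε / 2 := by
      rw [hKdef]
      have := neg_abs_le (a t₀ - A' + ε / 2)
      have := abs_nonneg (a t₀ - A' - ε / 2)
      linarith
    have hUB : a t - A' - ε / 2 ≤ K * Real.exp (-(F t)) :=
      calc a t - A' - ε / 2 = (a t - A' - ε / 2) * (Real.exp (F t) * Real.exp (-(F t))) := by
            rw [hexp1, mul_one]
        _ = ((a t - A' - ε / 2) * Real.exp (F t)) * Real.exp (-(F t)) := by ring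
        _ ≤ K * Real.exp (-(F t)) :=
            mul_le_mul_of_nonneg_right (le_trans hU hC') (Real.exp_pos _).le
    have hL' : a t₀ - A' + ε / 2 ≤ (a t - A' + ε / 2) * Real.exp (F t) := by
      simpa [sub_neg_eq_add] using hL
    have hLB : -(K * Real.exp (-(F t))) ≤ a t - A' + ε / 2 := by
      have h2 : -K * Real.exp (-(F t)) ≤ (a t₀ - A' + ε / 2) * Real.exp (-(F t)) :=
        mul_le_mul_of_nonneg_right hC (Real.exp_pos _).le
      have h3 : (a t₀ - A' + ε / 2) * Real.exp (-(F t))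
          ≤ ((a t - A' + ε / 2) * Real.exp (F t)) * Real.exp (-(F t)) :=
        mul_le_mul_of_nonneg_right hL' (Real.exp_pos _).le
      have h4 : ((a t - A' + ε / 2) * Real.exp (F t)) * Real.exp (-(F t)) = a t - A' + ε / 2 := by
        rw [mul_assoc, hexp1, mul_one]
      rw [neg_mul] at h2
      linarith
    have hKmono : K * Real.exp (-(F t)) ≤ K * Real.exp (-(τmin * (t - t₀))) :=
      mul_le_mul_of_nonneg_left hexple hK0
    rw [abs_le]
    constructor <;> linarith [hLB, hKmono, hUB]
  -- the exponential tail vanishes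
  have h3 : Filter.Tendsto (fun t : ℝ => τmin * (t - t₀)) Filter.atTop Filter.atTop := by
    apply Filter.Tendsto.const_mul_atTop hτmin
    simpa [sub_eq_add_neg] using Filter.tendsto_atTop_add_const_right Filter.atTop (-t₀) Filter.tendsto_id
  have h4 : Filter.Tendsto (fun t : ℝ => K * Real.exp (-(τmin * (t - t₀))))
      Filter.atTop (nhds 0) := by
    have := (Real.tendsto_exp_atBot.comp (Filter.tendsto_neg_atTop_atBot.comp h3)).const_mul K
    simpa using this
  have h5 : ∀ᶠ t in Filter.atTop, K * Real.exp (-(τmin * (t - t₀))) < ε / 2 :=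
    h4.eventually_lt_const hε2
  filter_upwards [Filter.eventually_ge_atTop t₀, h5] with t ht hlt
  rw [Real.dist_eq]
  have := hbound t ht
  linarith
end
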